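/- Let d ≥ 1, u > 0, κ ≥ 1, m ∈ ℝ^{2d}, and let Σ be a symmetric positive-definite (2d)×(2d) real matrix such that κ^{-1}|𝕋_u^{-1}x|² ≤ ⟨Σ^{-1}x, x⟩ ≤ κ|𝕋_u^{-1}x|² for all x ∈ ℝ^{2d}. Define the Gaussian density p(y) := (2π)^{-d} (det Σ)^{-1/2} exp(−(1/2)⟨Σ^{-1}(m−y), m−y⟩). Then there exist constants C₀ ≥ 1 and λ₀ ≥ 1, depending only on d and κ, such that for all y = (y₁,y₂) ∈ ℝ^{2d}: C₀^{-1} g_{λ₀^{-1}}(u, m−y) ≤ p(y) ≤ C₀ g_{λ₀}(u, m−y), |∇_{y₁} p(y)| ≤ C₀ u^{-1/2} g_{λ₀}(u, m−y), and |∇_{y₂} p(y)| ≤ C₀ u^{-3/2} g_{λ₀}(u, m−y). -/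

import Mathlib

set_option linter.unusedSectionVars false
set_option linter.unusedVariables false
set_option maxHeartbeats 1000000


open MeasureTheory Matrix
open scoped BigOperators

/-- The anisotropic Gaussian kernel on `ℝ^{2d}`, realized on `(Fin d ⊕ Fin d) → ℝ`
with first block indexed by `Sum.inl` and second block by `Sum.inr`. -/
noncomputable def gkS (d : ℕ) (lam u : ℝ) (z : (Fin d ⊕ Fin d) → ℝ) : ℝ :=
  (2 * Real.pi * lam) ^ (-(d : ℝ)) * u ^ (-(2 * (d : ℝ))) *
    Real.exp (-((∑ i : Fin d, z (Sum.inl i) ^ 2) / (lam * u) +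
      (∑ i : Fin d, z (Sum.inr i) ^ 2) / (lam * u ^ 3)))

/-- `|𝕋_u^{-1} z|² = |z₁|²/u + |z₂|²/u³`. -/
noncomputable def tsq (d : ℕ) (u : ℝ) (z : (Fin d ⊕ Fin d) → ℝ) : ℝ :=
  (∑ i : Fin d, z (Sum.inl i) ^ 2) / u + (∑ i : Fin d, z (Sum.inr i) ^ 2) / u ^ 3

/-- Partial derivative in the `k`-th coordinate. -/
noncomputable def pdS (d : ℕ) (k : Fin d ⊕ Fin d) (f : ((Fin d ⊕ Fin d) → ℝ) → ℝ)
    (y : (Fin d ⊕ Fin d) → ℝ) : ℝ :=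
  deriv (fun t => f (Function.update y k t)) (y k)

/-- The Gaussian density with mean `m` and covariance `S`. -/
noncomputable def gaussDens (d : ℕ) (S : Matrix (Fin d ⊕ Fin d) (Fin d ⊕ Fin d) ℝ)
    (m y : (Fin d ⊕ Fin d) → ℝ) : ℝ :=
  (2 * Real.pi) ^ (-(d : ℝ)) * S.det ^ (-(1 : ℝ) / 2) *
    Real.exp (-(1 / 2) * ((S⁻¹ *ᵥ (m - y)) ⬝ᵥ (m - y)))

lemma tsq_nonneg (d : ℕ) {u : ℝ} (hu : 0 < u) (z : (Fin d ⊕ Fin d) → ℝ) : 0 ≤ tsq d u z := by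
  unfold tsq; positivity

lemma gkS_eq (d : ℕ) {lam u : ℝ} (hl : 0 < lam) (hu : 0 < u) (z : (Fin d ⊕ Fin d) → ℝ) :
    gkS d lam u z = ((2*Real.pi*lam)^d)⁻¹ * ((u^(2*d))⁻¹ * Real.exp (-(tsq d u z / lam))) := by
  unfold gkS tsq
  have h1 : (2*Real.pi*lam) ^ (-(d:ℝ)) = ((2*Real.pi*lam)^d)⁻¹ := by
    rw [Real.rpow_neg (by positivity), Real.rpow_natCast]
  have h2 : u ^ (-(2*(d:ℝ))) = ((u^(2*d))⁻¹) := by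
    rw [show -(2*(d:ℝ)) = -((2*d : ℕ):ℝ) by push_cast; ring, Real.rpow_neg hu.le,
      Real.rpow_natCast]
  have h3 : (∑ i : Fin d, z (Sum.inl i) ^ 2) / (lam * u) +
      (∑ i : Fin d, z (Sum.inr i) ^ 2) / (lam * u ^ 3)
      = ((∑ i : Fin d, z (Sum.inl i) ^ 2) / u + (∑ i : Fin d, z (Sum.inr i) ^ 2) / u ^ 3) / lam := by
    field_simp
  rw [h1, h2, h3, mul_assoc]

lemma gaussDens_eq (d : ℕ) (S : Matrix (Fin d ⊕ Fin d) (Fin d ⊕ Fin d) ℝ)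
    (hS : 0 < S.det) (m y : (Fin d ⊕ Fin d) → ℝ) :
    gaussDens d S m y = ((2*Real.pi)^d)⁻¹ * S.det ^ (-(1:ℝ)/2) *
      Real.exp (-(1/2) * ((S⁻¹ *ᵥ (m - y)) ⬝ᵥ (m - y))) := by
  unfold gaussDens
  rw [show (2*Real.pi) ^ (-(d:ℝ)) = ((2*Real.pi)^d)⁻¹ by
    rw [Real.rpow_neg (by positivity), Real.rpow_natCast]]

section Helpers
variable {n : Type*} [Fintype n] [DecidableEq n]

lemma dot_swap {A : Matrix n n ℝ} (hA : Aᵀ = A) (v w : n → ℝ) :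
    (A *ᵥ w) ⬝ᵥ v = (A *ᵥ v) ⬝ᵥ w := by
  rw [dotProduct_comm, dotProduct_mulVec, ← mulVec_transpose, hA]

lemma cs_lemma {A : Matrix n n ℝ} (hA : Aᵀ = A)
    (hpos : ∀ x : n → ℝ, 0 ≤ (A *ᵥ x) ⬝ᵥ x) (v w : n → ℝ) :
    ((A *ᵥ v) ⬝ᵥ w) ^ 2 ≤ ((A *ᵥ v) ⬝ᵥ v) * ((A *ᵥ w) ⬝ᵥ w) := by
  have key : ∀ t : ℝ, 0 ≤ ((A *ᵥ w) ⬝ᵥ w) * (t * t) + (2 * ((A *ᵥ v) ⬝ᵥ w)) * t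
      + ((A *ᵥ v) ⬝ᵥ v) := by
    intro t
    have h0 := hpos (v + t • w)
    have hexp : (A *ᵥ (v + t • w)) ⬝ᵥ (v + t • w)
        = ((A *ᵥ w) ⬝ᵥ w) * (t * t) + (2 * ((A *ᵥ v) ⬝ᵥ w)) * t + ((A *ᵥ v) ⬝ᵥ v) := by
      simp only [mulVec_add, mulVec_smul, add_dotProduct, dotProduct_add, smul_dotProduct,
        dotProduct_smul, smul_eq_mul, dot_swap hA v w]
      ring
    rw [hexp] at h0; exact h0
  have hd := discrim_le_zero key
  rw [discrim] at hd
  nlinarith [hd]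

lemma quad_expand {A : Matrix n n ℝ} (hA : Aᵀ = A) (w : n → ℝ) (k : n) (s : ℝ) :
    (A *ᵥ Function.update w k s) ⬝ᵥ Function.update w k s
    = (A *ᵥ w) ⬝ᵥ w + (s - w k) * (2 * (A *ᵥ w) k) + (s - w k) ^ 2 * A k k := by
  set e : n → ℝ := Pi.single k (1:ℝ) with he
  have hupd : Function.update w k s = w + (s - w k) • e := by
    funext j
    by_cases h : j = k
    · subst h; simp [he]
    · simp [Function.update_of_ne h, Pi.single_eq_of_ne h, he]
  have h1 : (A *ᵥ e) ⬝ᵥ w = (A *ᵥ w) k := by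
    rw [dot_swap hA, he, dotProduct_single, mul_one]
  have h2 : (A *ᵥ w) ⬝ᵥ e = (A *ᵥ w) k := by
    rw [he, dotProduct_single, mul_one]
  have h3 : (A *ᵥ e) ⬝ᵥ e = A k k := by
    rw [he, dotProduct_single, mul_one, mulVec_single]
    simp
  rw [hupd]
  simp only [mulVec_add, mulVec_smul, add_dotProduct, dotProduct_add, smul_dotProduct,
    dotProduct_smul, smul_eq_mul, h1, h2, h3]
  ring

lemma deriv_gauss {A : Matrix n n ℝ} (hA : Aᵀ = A) (c : ℝ) (m y : n → ℝ) (k : n) :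
    deriv (fun t => c * Real.exp (-(1/2) *
      ((A *ᵥ (m - Function.update y k t)) ⬝ᵥ (m - Function.update y k t)))) (y k)
    = c * Real.exp (-(1/2) * ((A *ᵥ (m - y)) ⬝ᵥ (m - y))) * (A *ᵥ (m - y)) k := by
  set v := m - y with hv
  set q := (A *ᵥ v) ⬝ᵥ v with hq
  set bb := (A *ᵥ v) k with hbb
  have hsub : ∀ t : ℝ, m - Function.update y k t = Function.update v k (m k - t) := by
    intro t; funext j
    by_cases h : j = k
    · subst h; simp [hv]
    · simp [Function.update_of_ne h, hv]
  have hfun : (fun t => c * Real.exp (-(1/2) *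
      ((A *ᵥ (m - Function.update y k t)) ⬝ᵥ (m - Function.update y k t))))
      = fun t => c * Real.exp (-(1/2) * (q + (y k - t) * (2*bb) + (y k - t)^2 * A k k)) := by
    funext t
    rw [hsub t, quad_expand hA v k (m k - t)]
    have hyk : m k - t - v k = y k - t := by simp [hv]
    rw [hyk, hq, hbb]
  rw [hfun]
  have h1 : HasDerivAt (fun t : ℝ => y k - t) (-1) (y k) :=
    (hasDerivAt_id (y k)).const_sub (y k)
  have h2 : HasDerivAt (fun t : ℝ => (y k - t) * (2*bb)) (-(2*bb)) (y k) := by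
    simpa using h1.mul_const (2*bb)
  have h3 : HasDerivAt (fun t : ℝ => (y k - t)^2 * A k k) 0 (y k) := by
    have := (h1.pow 2).mul_const (A k k)
    simpa using this
  have h4 : HasDerivAt (fun t : ℝ => -(1/2) * (q + (y k - t) * (2*bb) + (y k - t)^2 * A k k))
      bb (y k) := by
    have := (((hasDerivAt_const (y k) q).add h2).add h3).const_mul (-(1/2 : ℝ))
    exact this.congr_deriv (by ring)
  have h5 := (h4.exp).const_mul c
  rw [h5.deriv]
  simp only [sub_self, ne_eq, OfNat.ofNat_ne_zero, not_false_eq_true, zero_pow, zero_mul,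
    add_zero, mul_zero]
  ring

lemma det_bounds {B : Matrix n n ℝ} (hB : B.IsHermitian) {a b : ℝ} (ha : 0 ≤ a)
    (h : ∀ x : n → ℝ, a * (∑ j, x j ^ 2) ≤ (B *ᵥ x) ⬝ᵥ x ∧
      (B *ᵥ x) ⬝ᵥ x ≤ b * (∑ j, x j ^ 2)) :
    a ^ (Fintype.card n) ≤ B.det ∧ B.det ≤ b ^ (Fintype.card n) := by
  have heig : ∀ i, a ≤ hB.eigenvalues i ∧ hB.eigenvalues i ≤ b := by
    intro i
    have hnorm : ∑ j, (hB.eigenvectorBasis i) j ^ 2 = 1 := by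
      have h1 : ‖hB.eigenvectorBasis i‖ = 1 := hB.eigenvectorBasis.orthonormal.1 i
      have h2 := EuclideanSpace.norm_eq (hB.eigenvectorBasis i)
      rw [h1] at h2
      have h3 : Real.sqrt (∑ j, ‖(hB.eigenvectorBasis i) j‖ ^ 2) = 1 := h2.symm
      rw [Real.sqrt_eq_one] at h3
      simpa [Real.norm_eq_abs, sq_abs] using h3
    have heq : hB.eigenvalues i = (B *ᵥ ⇑(hB.eigenvectorBasis i)) ⬝ᵥ ⇑(hB.eigenvectorBasis i) := by
      have := hB.eigenvalues_eq i
      simpa [dotProduct_comm] using this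
    have hc := h ⇑(hB.eigenvectorBasis i)
    rw [hnorm] at hc
    rw [heq]
    simpa using hc
  have hdet : B.det = ∏ i, hB.eigenvalues i := by
    have := hB.det_eq_prod_eigenvalues
    simpa using this
  rw [hdet]
  constructor
  · calc a ^ (Fintype.card n) = ∏ _i : n, a := by rw [Finset.prod_const, Finset.card_univ]
      _ ≤ ∏ i, hB.eigenvalues i :=
        Finset.prod_le_prod (fun i _ => ha) (fun i _ => (heig i).1)
  · calc (∏ i, hB.eigenvalues i) ≤ ∏ _i : n, b :=
        Finset.prod_le_prod (fun i _ => le_trans ha (heig i).1) (fun i _ => (heig i).2)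
      _ = b ^ (Fintype.card n) := by rw [Finset.prod_const, Finset.card_univ]

end Helpers


lemma inv_mul_le_mul_inv {a b c e : ℝ} (ha : 0 < a) (he : 0 < e) (h : b * e ≤ c * a) :
    a⁻¹ * b ≤ c * e⁻¹ := by
  rw [show a⁻¹ * b = b / a by rw [div_eq_mul_inv]; ring,
    show c * e⁻¹ = c / e by rw [div_eq_mul_inv]]
  rw [div_le_div_iff₀ ha he]
  exact h


lemma aux_exp1 {κ t q : ℝ} (hκ0 : 0 < κ) (hq0 : 0 ≤ q) (htq : t ≤ κ * q) :
    Real.exp (-(1/2) * q) ≤ Real.exp (-(t/(4*κ))) := by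
  apply Real.exp_le_exp.2
  rw [neg_mul, neg_le_neg_iff, div_le_iff₀ (by positivity : (0:ℝ) < 4*κ)]
  rw [show (1:ℝ)/2*q*(4*κ) = 2*(κ*q) by ring]
  nlinarith [mul_nonneg hκ0.le hq0]

lemma aux_exp2 {κ t q : ℝ} (hκ0 : 0 < κ) (hq0 : 0 ≤ q) (htq : t ≤ κ * q) :
    Real.exp (-(1/2) * q) ≤ Real.exp (-(t/(4*κ))) * Real.exp (-(t/(4*κ))) := by
  rw [← Real.exp_add]
  apply Real.exp_le_exp.2
  rw [show -(t/(4*κ)) + -(t/(4*κ)) = -(t/(2*κ)) by ring]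
  rw [neg_mul, neg_le_neg_iff, div_le_iff₀ (by positivity : (0:ℝ) < 2*κ)]
  rw [show (1:ℝ)/2*q*(2*κ) = κ*q by ring]
  exact htq

lemma aux_exp3 {κ t q : ℝ} (hκ0 : 0 < κ) (ht0 : 0 ≤ t) (hq2 : q ≤ κ * t) :
    Real.exp (-(t / (4*κ)⁻¹)) ≤ Real.exp (-(1/2) * q) := by
  apply Real.exp_le_exp.2
  rw [show t / (4*κ)⁻¹ = t*(4*κ) by field_simp, neg_mul, neg_le_neg_iff]
  nlinarith [mul_nonneg hκ0.le ht0, hq2]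

lemma aux_exp4 {κ t : ℝ} (hκ : 1 ≤ κ) (ht0 : 0 ≤ t) :
    Real.sqrt t * Real.exp (-(t/(4*κ))) ≤ 5*κ := by
  have hκ0 : (0:ℝ) < κ := lt_of_lt_of_le one_pos hκ
  have hs : Real.sqrt t ≤ 1 + t := by
    nlinarith [Real.sq_sqrt ht0, Real.sqrt_nonneg t]
  have hex : t ≤ 4*κ * Real.exp (t/(4*κ)) := by
    have h1 := Real.add_one_le_exp (t/(4*κ))
    have h2 : t/(4*κ) ≤ Real.exp (t/(4*κ)) := by linarith
    rw [div_le_iff₀ (by positivity : (0:ℝ) < 4*κ)] at h2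
    calc t ≤ Real.exp (t/(4*κ)) * (4*κ) := h2
      _ = 4*κ * Real.exp (t/(4*κ)) := by ring
  have hte : t * Real.exp (-(t/(4*κ))) ≤ 4*κ := by
    rw [Real.exp_neg, mul_inv_le_iff₀ (Real.exp_pos _)]
    exact hex
  have he1 : Real.exp (-(t/(4*κ))) ≤ 1 :=
    Real.exp_le_one_iff.2 (neg_nonpos.2 (by positivity))
  have hmul := mul_le_mul_of_nonneg_right hs (Real.exp_nonneg (-(t/(4*κ))))
  have h5 : (1+t) * Real.exp (-(t/(4*κ)))
      = Real.exp (-(t/(4*κ))) + t * Real.exp (-(t/(4*κ))) := by ring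
  linarith [hte, he1, hκ]


lemma aux_core {κ : ℝ} (hκ : 1 ≤ κ) (d : ℕ) : κ^d * (4*κ)^d ≤ 5*κ^2*(4*κ^2)^d := by
  have hκ0 : (0:ℝ) < κ := lt_of_lt_of_le one_pos hκ
  rw [← mul_pow, show κ*(4*κ) = 4*κ^2 by ring]
  nlinarith [pow_pos (show (0:ℝ) < 4*κ^2 by nlinarith) d, sq_nonneg κ, sq_nonneg (κ-1)]

lemma aux_scal_upper {κ : ℝ} (hκ : 1 ≤ κ) (d : ℕ) :
    ((2*Real.pi)^d)⁻¹ * κ^d ≤ (5*κ^2*(4*κ^2)^d) * ((2*Real.pi*(4*κ))^d)⁻¹ := by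
  have hκ0 : (0:ℝ) < κ := lt_of_lt_of_le one_pos hκ
  have hπ : (0:ℝ) < (2*Real.pi)^d := by positivity
  rw [show (2*Real.pi*(4*κ))^d = (2*Real.pi)^d * (4*κ)^d by rw [mul_pow]]
  apply inv_mul_le_mul_inv hπ (by positivity)
  calc κ^d * ((2*Real.pi)^d * (4*κ)^d) = (κ^d * (4*κ)^d) * (2*Real.pi)^d := by ring
    _ ≤ (5*κ^2*(4*κ^2)^d) * (2*Real.pi)^d :=
        mul_le_mul_of_nonneg_right (aux_core hκ d) (by positivity)

lemma aux_scal_lower {κ : ℝ} (hκ : 1 ≤ κ) (d : ℕ) :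
    (5*κ^2*(4*κ^2)^d)⁻¹ * ((2*Real.pi*(4*κ)⁻¹)^d)⁻¹ ≤ ((2*Real.pi)^d)⁻¹ * (κ^d)⁻¹ := by
  have hκ0 : (0:ℝ) < κ := lt_of_lt_of_le one_pos hκ
  have hC : (0:ℝ) < 5*κ^2*(4*κ^2)^d := by positivity
  rw [show (2*Real.pi*(4*κ)⁻¹)^d = (2*Real.pi)^d * ((4*κ)^d)⁻¹ by rw [mul_pow, inv_pow],
    show ((2*Real.pi)^d * ((4*κ)^d)⁻¹)⁻¹ = ((2*Real.pi)^d)⁻¹ * (4*κ)^d by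
      rw [mul_inv, inv_inv]]
  apply inv_mul_le_mul_inv hC (by positivity : (0:ℝ) < κ^d)
  calc ((2*Real.pi)^d)⁻¹ * (4*κ)^d * κ^d = (κ^d * (4*κ)^d) * ((2*Real.pi)^d)⁻¹ := by ring
    _ ≤ (5*κ^2*(4*κ^2)^d) * ((2*Real.pi)^d)⁻¹ :=
        mul_le_mul_of_nonneg_right (aux_core hκ d) (by positivity)
    _ = ((2*Real.pi)^d)⁻¹ * (5*κ^2*(4*κ^2)^d) := by ring

lemma aux_scal_grad {κ : ℝ} (hκ : 1 ≤ κ) (d : ℕ) :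
    ((2*Real.pi)^d)⁻¹ * (κ^d * (κ * (5*κ))) ≤ (5*κ^2*(4*κ^2)^d) * ((2*Real.pi*(4*κ))^d)⁻¹ := by
  have hκ0 : (0:ℝ) < κ := lt_of_lt_of_le one_pos hκ
  have hπ : (0:ℝ) < (2*Real.pi)^d := by positivity
  rw [show (2*Real.pi*(4*κ))^d = (2*Real.pi)^d * (4*κ)^d by rw [mul_pow]]
  apply inv_mul_le_mul_inv hπ (by positivity)
  apply le_of_eq
  have h : (4*κ^2)^d = κ^d * (4*κ)^d := by
    rw [← mul_pow]
    congr 1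
    ring
  rw [h]
  ring


/-- Gaussian densities whose covariance is comparable to the kinetic scale matrix satisfy
two-sided anisotropic heat-kernel bounds, and the corresponding gradient bounds in the
non-degenerate and degenerate variables. -/
theorem stmt9 (d : ℕ) (hd : 1 ≤ d) (κ : ℝ) (hκ : 1 ≤ κ) :
    ∃ C₀ : ℝ, 1 ≤ C₀ ∧ ∃ lam₀ : ℝ, 1 ≤ lam₀ ∧
      ∀ u : ℝ, 0 < u → ∀ m : (Fin d ⊕ Fin d) → ℝ,
      ∀ S : Matrix (Fin d ⊕ Fin d) (Fin d ⊕ Fin d) ℝ, S.IsSymm → S.PosDef →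
        (∀ x : (Fin d ⊕ Fin d) → ℝ,
          κ⁻¹ * tsq d u x ≤ (S⁻¹ *ᵥ x) ⬝ᵥ x ∧ (S⁻¹ *ᵥ x) ⬝ᵥ x ≤ κ * tsq d u x) →
        ∀ y : (Fin d ⊕ Fin d) → ℝ,
          C₀⁻¹ * gkS d lam₀⁻¹ u (m - y) ≤ gaussDens d S m y ∧
          gaussDens d S m y ≤ C₀ * gkS d lam₀ u (m - y) ∧
          Real.sqrt (∑ i : Fin d, (pdS d (Sum.inl i) (gaussDens d S m) y) ^ 2) ≤
            C₀ * u ^ (-(1 : ℝ) / 2) * gkS d lam₀ u (m - y) ∧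
          Real.sqrt (∑ i : Fin d, (pdS d (Sum.inr i) (gaussDens d S m) y) ^ 2) ≤
            C₀ * u ^ (-(3 : ℝ) / 2) * gkS d lam₀ u (m - y) := by
  have hκ0 : (0:ℝ) < κ := lt_of_lt_of_le one_pos hκ
  have h4κ2 : (1:ℝ) ≤ 4*κ^2 := by nlinarith
  have h4κ2d : (1:ℝ) ≤ (4*κ^2)^d := one_le_pow₀ h4κ2
  have hC0pos : (0:ℝ) < 5*κ^2*(4*κ^2)^d := by positivity
  refine ⟨5*κ^2*(4*κ^2)^d, by nlinarith, 4*κ, by linarith, ?_⟩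
  intro u hu m S hSsymm hSpd hcomp y
  have hdS : 0 < S.det := hSpd.det_pos
  set C₀ : ℝ := 5*κ^2*(4*κ^2)^d with hC₀
  obtain ⟨A, hA⟩ : ∃ A, S⁻¹ = A := ⟨S⁻¹, rfl⟩
  simp only [hA] at hcomp
  have hAsymm : Aᵀ = A := by rw [← hA, transpose_nonsing_inv, hSsymm]
  have htnn : ∀ z, 0 ≤ tsq d u z := fun z => tsq_nonneg d hu z
  have hκinv : (0:ℝ) < κ⁻¹ := inv_pos.2 hκ0
  have hqnn : ∀ x : (Fin d ⊕ Fin d) → ℝ, 0 ≤ (A *ᵥ x) ⬝ᵥ x := fun x =>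
    le_trans (mul_nonneg hκinv.le (htnn x)) (hcomp x).1
  set su := Real.sqrt u with hsu
  have hsu0 : 0 < su := Real.sqrt_pos.2 hu
  have hsq : su ^ 2 = u := Real.sq_sqrt hu.le
  -- determinant bounds
  set tf : (Fin d ⊕ Fin d) → ℝ := Sum.elim (fun _ => su) (fun _ => su^3) with htf
  set Dm := Matrix.diagonal tf with hDm
  have hDmT : Dmᵀ = Dm := Matrix.diagonal_transpose tf
  set B := Dm * A * Dm with hB
  have hBquad : ∀ x, (B *ᵥ x) ⬝ᵥ x = (A *ᵥ (Dm *ᵥ x)) ⬝ᵥ (Dm *ᵥ x) := by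
    intro x
    rw [hB, ← mulVec_mulVec, ← mulVec_mulVec]
    rw [dot_swap hDmT x (A *ᵥ (Dm *ᵥ x)), dotProduct_comm]
  have hDx : ∀ (x : (Fin d ⊕ Fin d) → ℝ) j, (Dm *ᵥ x) j = tf j * x j := by
    intro x j; rw [hDm]; exact mulVec_diagonal tf x j
  have h63 : (su^3)^2 = u^3 := by
    rw [← pow_mul, show 3*2 = 2*3 from rfl, pow_mul, hsq]
  have htsqD : ∀ x : (Fin d ⊕ Fin d) → ℝ, tsq d u (Dm *ᵥ x) = ∑ j, x j ^ 2 := by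
    intro x
    unfold tsq
    rw [Fintype.sum_sum_type]
    simp only [hDx, htf, Sum.elim_inl, Sum.elim_inr, mul_pow, h63]
    rw [← Finset.mul_sum, ← Finset.mul_sum, hsq]
    field_simp
  have hBh : B.IsHermitian := by
    have hBT : Bᵀ = B := by
      rw [hB, transpose_mul, transpose_mul, hDmT, hAsymm, mul_assoc]
    rw [Matrix.IsHermitian]
    rw [show B.conjTranspose = Bᵀ from rfl]
    exact hBT
  have hcard : Fintype.card (Fin d ⊕ Fin d) = 2*d := by
    simp [Fintype.card_sum]
    ring
  have hdetB := det_bounds hBh (le_of_lt hκinv) (fun x => by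
    have h1 := (hcomp (Dm *ᵥ x)).1
    have h2 := (hcomp (Dm *ᵥ x)).2
    rw [htsqD x] at h1 h2
    rw [hBquad x]
    exact ⟨h1, h2⟩)
  rw [hcard] at hdetB
  have hdetDm : Dm.det = u ^ (2*d) := by
    rw [hDm, det_diagonal, Fintype.prod_sum_type]
    simp only [htf, Sum.elim_inl, Sum.elim_inr, Finset.prod_const, Finset.card_univ,
      Fintype.card_fin]
    rw [← pow_mul, ← pow_add, show d + 3*d = 2*(2*d) by ring, pow_mul, hsq]
  have hdetA : A.det = S.det⁻¹ := by rw [← hA, det_nonsing_inv, Ring.inverse_eq_inv]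
  have hdetB_eq : B.det = (u^(2*d))^2 * S.det⁻¹ := by
    rw [hB, det_mul, det_mul, hdetDm, hdetA]; ring
  have hP2 : (0:ℝ) < u^(2*d) := by positivity
  have hkk : κ^(2*d) = (κ^d)^2 := by rw [show 2*d = d*2 by ring, pow_mul]
  have hkd : (0:ℝ) < κ^d := by positivity
  -- S.det ≤ κ^{2d} P2²
  have hSub : S.det ≤ (κ^d)^2 * (u^(2*d))^2 := by
    have h1 := hdetB.1
    rw [hdetB_eq, inv_pow] at h1
    rw [show (u^(2*d))^2 * S.det⁻¹ = (u^(2*d))^2 / S.det by rw [div_eq_mul_inv]] at h1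
    rw [le_div_iff₀ hdS, inv_mul_le_iff₀ (by positivity : (0:ℝ) < κ^(2*d)), hkk] at h1
    linarith [h1]
  have hSlb : (u^(2*d))^2 ≤ (κ^d)^2 * S.det := by
    have h2 := hdetB.2
    rw [hdetB_eq] at h2
    rw [show (u^(2*d))^2 * S.det⁻¹ = (u^(2*d))^2 / S.det by rw [div_eq_mul_inv]] at h2
    rw [div_le_iff₀ hdS, hkk] at h2
    linarith [h2]
  have hs1 : Real.sqrt S.det ≤ κ^d * u^(2*d) := by
    rw [show κ^d * u^(2*d) = Real.sqrt ((κ^d * u^(2*d))^2) from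
      (Real.sqrt_sq (by positivity)).symm]
    apply Real.sqrt_le_sqrt
    calc S.det ≤ (κ^d)^2 * (u^(2*d))^2 := hSub
      _ = (κ^d * u^(2*d))^2 := by ring
  have hs2 : (κ^d)⁻¹ * u^(2*d) ≤ Real.sqrt S.det := by
    rw [show (κ^d)⁻¹ * u^(2*d) = Real.sqrt (((κ^d)⁻¹ * u^(2*d))^2) from
      (Real.sqrt_sq (by positivity)).symm]
    apply Real.sqrt_le_sqrt
    rw [show ((κ^d)⁻¹ * u^(2*d))^2 = ((κ^d)^2)⁻¹ * (u^(2*d))^2 by rw [mul_pow, inv_pow]]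
    rw [inv_mul_le_iff₀ (by positivity : (0:ℝ) < (κ^d)^2)]
    exact hSlb
  have hsdet0 : 0 < Real.sqrt S.det := Real.sqrt_pos.2 hdS
  have hrpow : S.det ^ (-(1:ℝ)/2) = (Real.sqrt S.det)⁻¹ := by
    rw [show (-(1:ℝ)/2) = -(1/2 : ℝ) by norm_num, Real.rpow_neg hdS.le, ← Real.sqrt_eq_rpow]
  have hub : S.det ^ (-(1:ℝ)/2) ≤ κ^d * (u^(2*d))⁻¹ := by
    rw [hrpow]
    have h1 := inv_anti₀ (by positivity : (0:ℝ) < (κ^d)⁻¹ * u^(2*d)) hs2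
    rwa [mul_inv, inv_inv] at h1
  have hlb : (κ^d)⁻¹ * (u^(2*d))⁻¹ ≤ S.det ^ (-(1:ℝ)/2) := by
    rw [hrpow]
    have h1 := inv_anti₀ hsdet0 hs1
    rwa [mul_inv] at h1
  -- quadratic form quantities
  obtain ⟨t, ht⟩ : ∃ t, tsq d u (m - y) = t := ⟨_, rfl⟩
  obtain ⟨q, hq⟩ : ∃ q, (A *ᵥ (m - y)) ⬝ᵥ (m - y) = q := ⟨_, rfl⟩
  obtain ⟨g, hg⟩ : ∃ g, A *ᵥ (m - y) = g := ⟨_, rfl⟩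
  have ht0 : 0 ≤ t := ht ▸ htnn (m - y)
  have hq1 : κ⁻¹ * t ≤ q := by rw [← ht, ← hq]; exact (hcomp (m - y)).1
  have hq2 : q ≤ κ * t := by rw [← ht, ← hq]; exact (hcomp (m - y)).2
  have hq0 : 0 ≤ q := by rw [← hq]; exact hqnn (m - y)
  have htκq : t ≤ κ * q := by rwa [inv_mul_le_iff₀ hκ0] at hq1
  obtain ⟨S1, hS1⟩ : ∃ S1, ∑ i : Fin d, g (Sum.inl i)^2 = S1 := ⟨_, rfl⟩
  obtain ⟨S2, hS2⟩ : ∃ S2, ∑ i : Fin d, g (Sum.inr i)^2 = S2 := ⟨_, rfl⟩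
  have hS1nn : 0 ≤ S1 := by rw [← hS1]; positivity
  have hS2nn : 0 ≤ S2 := by rw [← hS2]; positivity
  have hdot : g ⬝ᵥ (Sum.elim (fun i => u * g (Sum.inl i))
      (fun i => u^3 * g (Sum.inr i)) : (Fin d ⊕ Fin d) → ℝ) = u * S1 + u^3 * S2 := by
    rw [← hS1, ← hS2]
    simp only [dotProduct, Fintype.sum_sum_type, Sum.elim_inl, Sum.elim_inr]
    rw [Finset.mul_sum, Finset.mul_sum]
    congr 1 <;> exact Finset.sum_congr rfl (fun i _ => by ring)
  have htw : tsq d u (Sum.elim (fun i => u * g (Sum.inl i))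
      (fun i => u^3 * g (Sum.inr i)) : (Fin d ⊕ Fin d) → ℝ) = u * S1 + u^3 * S2 := by
    rw [← hS1, ← hS2]
    unfold tsq
    simp only [Sum.elim_inl, Sum.elim_inr, mul_pow]
    rw [← Finset.mul_sum, ← Finset.mul_sum]
    field_simp
  have hbp0 : 0 ≤ u * S1 + u^3 * S2 := by positivity
  have hqw : (A *ᵥ (Sum.elim (fun i => u * g (Sum.inl i))
      (fun i => u^3 * g (Sum.inr i)) : (Fin d ⊕ Fin d) → ℝ)) ⬝ᵥ
      (Sum.elim (fun i => u * g (Sum.inl i))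
      (fun i => u^3 * g (Sum.inr i)) : (Fin d ⊕ Fin d) → ℝ) ≤ κ * (u * S1 + u^3 * S2) := by
    have h1 := (hcomp (Sum.elim (fun i => u * g (Sum.inl i))
      (fun i => u^3 * g (Sum.inr i)) : (Fin d ⊕ Fin d) → ℝ)).2
    rwa [htw] at h1
  have hbpq : u * S1 + u^3 * S2 ≤ κ * q := by
    have hcs := cs_lemma hAsymm hqnn (m - y) (Sum.elim (fun i => u * g (Sum.inl i))
      (fun i => u^3 * g (Sum.inr i)) : (Fin d ⊕ Fin d) → ℝ)
    rw [hq, hg, hdot] at hcs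
    have h1 : (u * S1 + u^3 * S2)^2 ≤ q * (κ * (u * S1 + u^3 * S2)) :=
      le_trans hcs (mul_le_mul_of_nonneg_left hqw hq0)
    rcases eq_or_lt_of_le hbp0 with h|h
    · rw [← h]; positivity
    · apply le_of_mul_le_mul_right _ h
      calc (u * S1 + u^3 * S2) * (u * S1 + u^3 * S2) = (u * S1 + u^3 * S2)^2 := by ring
        _ ≤ q * (κ * (u * S1 + u^3 * S2)) := h1
        _ = κ * q * (u * S1 + u^3 * S2) := by ring
  have hsum1 : S1 ≤ κ^2 * t / u := by
    rw [le_div_iff₀ hu]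
    calc S1 * u = u * S1 := by ring
      _ ≤ u * S1 + u^3 * S2 := le_add_of_nonneg_right (by positivity)
      _ ≤ κ * q := hbpq
      _ ≤ κ * (κ * t) := mul_le_mul_of_nonneg_left hq2 hκ0.le
      _ = κ^2 * t := by ring
  have hsum2 : S2 ≤ κ^2 * t / u^3 := by
    rw [le_div_iff₀ (pow_pos hu 3)]
    calc S2 * u^3 = u^3 * S2 := by ring
      _ ≤ u * S1 + u^3 * S2 := le_add_of_nonneg_left (by positivity)
      _ ≤ κ * q := hbpq
      _ ≤ κ * (κ * t) := mul_le_mul_of_nonneg_left hq2 hκ0.le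
      _ = κ^2 * t := by ring
  -- derivative of the density
  have hpd : ∀ k, pdS d k (gaussDens d S m) y = gaussDens d S m y * g k := by
    intro k
    have hder := deriv_gauss hAsymm ((2 * Real.pi) ^ (-(d : ℝ)) * S.det ^ (-(1 : ℝ) / 2)) m y k
    rw [hq, hg] at hder
    unfold pdS gaussDens
    simp only [hA]
    rw [hq]
    exact hder
  have hp0 : 0 ≤ gaussDens d S m y := by
    rw [gaussDens_eq d S hdS]
    positivity
  have hsqrt : ∀ (f : Fin d → Fin d ⊕ Fin d),
      Real.sqrt (∑ i : Fin d, (pdS d (f i) (gaussDens d S m) y)^2)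
      = gaussDens d S m y * Real.sqrt (∑ i : Fin d, g (f i)^2) := by
    intro f
    simp only [hpd]
    rw [show ∑ i : Fin d, (gaussDens d S m y * g (f i))^2
        = (gaussDens d S m y)^2 * ∑ i : Fin d, g (f i)^2 by
      rw [Finset.mul_sum]; exact Finset.sum_congr rfl (fun i _ => by ring)]
    rw [Real.sqrt_mul (sq_nonneg _), Real.sqrt_sq hp0]
  -- exponential estimates
  have hE1 := aux_exp1 hκ0 hq0 htκq
  have hEE := aux_exp2 hκ0 hq0 htκq
  have hE2 := aux_exp3 hκ0 ht0 hq2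
  have hE3 := aux_exp4 hκ ht0
  -- final assembly
  have hgk1 : gkS d (4*κ) u (m - y)
      = ((2*Real.pi*(4*κ))^d)⁻¹ * ((u^(2*d))⁻¹ * Real.exp (-(t/(4*κ)))) := by
    rw [gkS_eq d (by positivity) hu, ht]
  have hgk2 : gkS d (4*κ)⁻¹ u (m - y)
      = ((2*Real.pi*(4*κ)⁻¹)^d)⁻¹ * ((u^(2*d))⁻¹ * Real.exp (-(t/(4*κ)⁻¹))) := by
    rw [gkS_eq d (by positivity) hu, ht]
  have hgd : gaussDens d S m y
      = ((2*Real.pi)^d)⁻¹ * S.det ^ (-(1:ℝ)/2) * Real.exp (-(1/2) * q) := by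
    rw [gaussDens_eq d S hdS, hA, hq]
  have hdetpow_nn : 0 ≤ S.det ^ (-(1:ℝ)/2) := Real.rpow_nonneg hdS.le _
  have hru1 : u ^ (-(1:ℝ)/2) = (Real.sqrt u)⁻¹ := by
    rw [show (-(1:ℝ)/2) = -(1/2 : ℝ) by norm_num, Real.rpow_neg hu.le, ← Real.sqrt_eq_rpow]
  have hru3 : u ^ (-(3:ℝ)/2) = (Real.sqrt (u^3))⁻¹ := by
    have h1 : Real.sqrt (u^3) = u ^ ((3:ℝ)/2) := by
      rw [Real.sqrt_eq_rpow, ← Real.rpow_natCast u 3, ← Real.rpow_mul hu.le]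
      norm_num
    rw [h1, ← Real.rpow_neg hu.le]
    norm_num
  have hsqS1 : Real.sqrt S1 ≤ κ * Real.sqrt t * (Real.sqrt u)⁻¹ := by
    calc Real.sqrt S1 ≤ Real.sqrt (κ^2 * t / u) := Real.sqrt_le_sqrt hsum1
      _ = κ * Real.sqrt t * (Real.sqrt u)⁻¹ := by
        rw [Real.sqrt_div (by positivity) u, Real.sqrt_mul (by positivity) t,
          Real.sqrt_sq hκ0.le, div_eq_mul_inv]
  have hsqS2 : Real.sqrt S2 ≤ κ * Real.sqrt t * (Real.sqrt (u^3))⁻¹ := by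
    calc Real.sqrt S2 ≤ Real.sqrt (κ^2 * t / u^3) := Real.sqrt_le_sqrt hsum2
      _ = κ * Real.sqrt t * (Real.sqrt (u^3))⁻¹ := by
        rw [Real.sqrt_div (by positivity) (u^3), Real.sqrt_mul (by positivity) t,
          Real.sqrt_sq hκ0.le, div_eq_mul_inv]
  have hPub : gaussDens d S m y
      ≤ ((2*Real.pi)^d)⁻¹ * (κ^d * (u^(2*d))⁻¹) * Real.exp (-(1/2) * q) := by
    rw [hgd]
    gcongr
  refine ⟨?_, ?_, ?_, ?_⟩
  · -- lower bound
    rw [hgd, hgk2]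
    calc C₀⁻¹ * (((2*Real.pi*(4*κ)⁻¹)^d)⁻¹ * ((u^(2*d))⁻¹ * Real.exp (-(t/(4*κ)⁻¹))))
        = (C₀⁻¹ * ((2*Real.pi*(4*κ)⁻¹)^d)⁻¹) * (u^(2*d))⁻¹ * Real.exp (-(t/(4*κ)⁻¹)) := by
          ring
      _ ≤ (((2*Real.pi)^d)⁻¹ * (κ^d)⁻¹) * (u^(2*d))⁻¹ * Real.exp (-(1/2) * q) :=
          mul_le_mul (mul_le_mul_of_nonneg_right (aux_scal_lower hκ d) (by positivity))
            hE2 (Real.exp_nonneg _) (by positivity)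
      _ = ((2*Real.pi)^d)⁻¹ * ((κ^d)⁻¹ * (u^(2*d))⁻¹) * Real.exp (-(1/2) * q) := by ring
      _ ≤ ((2*Real.pi)^d)⁻¹ * S.det ^ (-(1:ℝ)/2) * Real.exp (-(1/2) * q) := by
          gcongr
  · -- upper bound
    rw [hgd, hgk1]
    calc ((2*Real.pi)^d)⁻¹ * S.det ^ (-(1:ℝ)/2) * Real.exp (-(1/2) * q)
        ≤ ((2*Real.pi)^d)⁻¹ * (κ^d * (u^(2*d))⁻¹) * Real.exp (-(t/(4*κ))) := by
          gcongr
      _ = (((2*Real.pi)^d)⁻¹ * κ^d) * ((u^(2*d))⁻¹ * Real.exp (-(t/(4*κ)))) := by ring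
      _ ≤ (C₀ * ((2*Real.pi*(4*κ))^d)⁻¹) * ((u^(2*d))⁻¹ * Real.exp (-(t/(4*κ)))) :=
          mul_le_mul_of_nonneg_right (aux_scal_upper hκ d) (by positivity)
      _ = C₀ * (((2*Real.pi*(4*κ))^d)⁻¹ * ((u^(2*d))⁻¹ * Real.exp (-(t/(4*κ))))) := by ring
  · -- gradient bound, first block
    rw [hsqrt Sum.inl, hS1, hgk1, hru1]
    calc gaussDens d S m y * Real.sqrt S1
        ≤ gaussDens d S m y * (κ * Real.sqrt t * (Real.sqrt u)⁻¹) := by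
          gcongr
      _ ≤ (((2*Real.pi)^d)⁻¹ * (κ^d * (u^(2*d))⁻¹) * Real.exp (-(1/2) * q))
            * (κ * Real.sqrt t * (Real.sqrt u)⁻¹) :=
          mul_le_mul_of_nonneg_right hPub (by positivity)
      _ = ((2*Real.pi)^d)⁻¹ * (κ^d * (u^(2*d))⁻¹) * κ * (Real.sqrt u)⁻¹ *
            (Real.sqrt t * Real.exp (-(1/2) * q)) := by ring
      _ ≤ ((2*Real.pi)^d)⁻¹ * (κ^d * (u^(2*d))⁻¹) * κ * (Real.sqrt u)⁻¹ *
            (Real.sqrt t * (Real.exp (-(t/(4*κ))) * Real.exp (-(t/(4*κ))))) := by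
          gcongr
      _ = ((2*Real.pi)^d)⁻¹ * (κ^d * (u^(2*d))⁻¹) * κ * (Real.sqrt u)⁻¹ *
            ((Real.sqrt t * Real.exp (-(t/(4*κ)))) * Real.exp (-(t/(4*κ)))) := by ring
      _ ≤ ((2*Real.pi)^d)⁻¹ * (κ^d * (u^(2*d))⁻¹) * κ * (Real.sqrt u)⁻¹ *
            ((5*κ) * Real.exp (-(t/(4*κ)))) := by
          gcongr
      _ = (((2*Real.pi)^d)⁻¹ * (κ^d * (κ * (5*κ)))) *
            ((Real.sqrt u)⁻¹ * ((u^(2*d))⁻¹ * Real.exp (-(t/(4*κ))))) := by ring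
      _ ≤ ((5*κ^2*(4*κ^2)^d) * ((2*Real.pi*(4*κ))^d)⁻¹) *
            ((Real.sqrt u)⁻¹ * ((u^(2*d))⁻¹ * Real.exp (-(t/(4*κ))))) :=
          mul_le_mul_of_nonneg_right (aux_scal_grad hκ d) (by positivity)
      _ = C₀ * (Real.sqrt u)⁻¹ *
            (((2*Real.pi*(4*κ))^d)⁻¹ * ((u^(2*d))⁻¹ * Real.exp (-(t/(4*κ))))) := by
          rw [hC₀]; ring
  · -- gradient bound, second block
    rw [hsqrt Sum.inr, hS2, hgk1, hru3]
    calc gaussDens d S m y * Real.sqrt S2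
        ≤ gaussDens d S m y * (κ * Real.sqrt t * (Real.sqrt (u^3))⁻¹) := by
          gcongr
      _ ≤ (((2*Real.pi)^d)⁻¹ * (κ^d * (u^(2*d))⁻¹) * Real.exp (-(1/2) * q))
            * (κ * Real.sqrt t * (Real.sqrt (u^3))⁻¹) :=
          mul_le_mul_of_nonneg_right hPub (by positivity)
      _ = ((2*Real.pi)^d)⁻¹ * (κ^d * (u^(2*d))⁻¹) * κ * (Real.sqrt (u^3))⁻¹ *
            (Real.sqrt t * Real.exp (-(1/2) * q)) := by ring
      _ ≤ ((2*Real.pi)^d)⁻¹ * (κ^d * (u^(2*d))⁻¹) * κ * (Real.sqrt (u^3))⁻¹ *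
            (Real.sqrt t * (Real.exp (-(t/(4*κ))) * Real.exp (-(t/(4*κ))))) := by
          gcongr
      _ = ((2*Real.pi)^d)⁻¹ * (κ^d * (u^(2*d))⁻¹) * κ * (Real.sqrt (u^3))⁻¹ *
            ((Real.sqrt t * Real.exp (-(t/(4*κ)))) * Real.exp (-(t/(4*κ)))) := by ring
      _ ≤ ((2*Real.pi)^d)⁻¹ * (κ^d * (u^(2*d))⁻¹) * κ * (Real.sqrt (u^3))⁻¹ *
            ((5*κ) * Real.exp (-(t/(4*κ)))) := by
          gcongr
      _ = (((2*Real.pi)^d)⁻¹ * (κ^d * (κ * (5*κ)))) *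
            ((Real.sqrt (u^3))⁻¹ * ((u^(2*d))⁻¹ * Real.exp (-(t/(4*κ))))) := by ring
      _ ≤ ((5*κ^2*(4*κ^2)^d) * ((2*Real.pi*(4*κ))^d)⁻¹) *
            ((Real.sqrt (u^3))⁻¹ * ((u^(2*d))⁻¹ * Real.exp (-(t/(4*κ))))) :=
          mul_le_mul_of_nonneg_right (aux_scal_grad hκ d) (by positivity)
      _ = C₀ * (Real.sqrt (u^3))⁻¹ *
            (((2*Real.pi*(4*κ))^d)⁻¹ * ((u^(2*d))⁻¹ * Real.exp (-(t/(4*κ))))) := by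
          rw [hC₀]; ring
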